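/- Fix perfect matchings I and F of K_{m,n} viewed as injective functions f, g : Fin m → Fin n. Define a sequence of injective functions h_0 = f, and for k = 0,…,m−1: if h_k(k) = g(k) then h_{k+1} = h_k; if g(k) is not in the image of h_k, then h_{k+1} agrees with h_k except h_{k+1}(k) = g(k); otherwise, if h_k(y') = g(k) for some y' ≠ k, then h_{k+1} swaps: h_{k+1}(k) = g(k), h_{k+1}(y') = h_k(k), and h_{k+1} = h_k elsewhere. Then each h_k is injective, and for every k, h_k agrees with g on all indices < k; in particular h_m = g. -/

import Mathlib

theorem canonical_path_reaches_target {m n : ℕ} (f g : Fin m → Fin n)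
    (hf : Function.Injective f) (hg : Function.Injective g)
    (h : ℕ → Fin m → Fin n) (h0 : h 0 = f)
    (hstep : ∀ (k : ℕ) (hk : k < m),
      (h k ⟨k, hk⟩ = g ⟨k, hk⟩ ∧ h (k + 1) = h k) ∨
      (g ⟨k, hk⟩ ∉ Set.range (h k) ∧
        h (k + 1) = Function.update (h k) ⟨k, hk⟩ (g ⟨k, hk⟩)) ∨
      (∃ y : Fin m, y ≠ ⟨k, hk⟩ ∧ h k y = g ⟨k, hk⟩ ∧
        h (k + 1) =
          Function.update (Function.update (h k) ⟨k, hk⟩ (g ⟨k, hk⟩)) y (h k ⟨k, hk⟩))) :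
    (∀ k ≤ m, Function.Injective (h k)) ∧
    (∀ k ≤ m, ∀ j : Fin m, (j : ℕ) < k → h k j = g j) ∧
    h m = g := by
  have key : ∀ k, k ≤ m → Function.Injective (h k) ∧
      ∀ j : Fin m, (j : ℕ) < k → h k j = g j := by
    intro k
    induction k with
    | zero =>
      intro _
      refine ⟨h0 ▸ hf, ?_⟩
      intro j hj; omega
    | succ k ih =>
      intro hkm
      have hk : k < m := by omega
      obtain ⟨hinj, hagree⟩ := ih (le_of_lt hk)
      set a : Fin m := ⟨k, hk⟩ with ha
      rcases hstep k hk with ⟨heq, hsucc⟩ | ⟨hnr, hsucc⟩ | ⟨y, hy, hyv, hsucc⟩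
      · refine ⟨hsucc ▸ hinj, ?_⟩
        intro j hj
        rw [hsucc]
        rcases lt_or_eq_of_le (Nat.lt_succ_iff.mp hj) with hj' | hj'
        · exact hagree j hj'
        · have : j = a := Fin.ext hj'
          rw [this]; exact heq
      · constructor
        · intro x z hxz
          rw [hsucc] at hxz
          by_cases hx : x = a <;> by_cases hz : z = a
          · rw [hx, hz]
          · rw [hx, Function.update_self, Function.update_of_ne hz] at hxz
            exact absurd ⟨z, hxz.symm⟩ hnr
          · rw [hz, Function.update_self, Function.update_of_ne hx] at hxz
            exact absurd ⟨x, hxz⟩ hnr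
          · rw [Function.update_of_ne hx, Function.update_of_ne hz] at hxz
            exact hinj hxz
        · intro j hj
          rw [hsucc]
          rcases lt_or_eq_of_le (Nat.lt_succ_iff.mp hj) with hj' | hj'
          · have hja : j ≠ a := by intro hja; rw [hja] at hj'; simp [ha] at hj'
            rw [Function.update_of_ne hja]
            exact hagree j hj'
          · have : j = a := Fin.ext hj'
            rw [this, Function.update_self]
      · have hform : h (k+1) = h k ∘ Equiv.swap a y := by
          rw [hsucc]
          funext x
          by_cases hx : x = y
          · subst hx
            simp [Function.update_self, Equiv.swap_apply_right, ha]
          · by_cases hx' : x = a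
            · subst hx'
              rw [Function.update_of_ne (Ne.symm hy), Function.update_self]
              simp [Equiv.swap_apply_left, hyv]
            · rw [Function.update_of_ne hx, Function.update_of_ne hx']
              simp [Equiv.swap_apply_of_ne_of_ne hx' hx]
        constructor
        · rw [hform]
          exact hinj.comp (Equiv.swap a y).injective
        · intro j hj
          rw [hform]
          rcases lt_or_eq_of_le (Nat.lt_succ_iff.mp hj) with hj' | hj'
          · have hja : j ≠ a := by intro hja; rw [hja] at hj'; simp [ha] at hj'
            have hjy : j ≠ y := by
              intro hjy
              have h2 : g j = g a := by rw [← hagree j hj', hjy, hyv]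
              exact hja (hg h2)
            simp [Function.comp, Equiv.swap_apply_of_ne_of_ne hja hjy,
              hagree j hj']
          · have : j = a := Fin.ext hj'
            subst this
            simp [Function.comp, Equiv.swap_apply_left, hyv, ha]
  refine ⟨fun k hk => (key k hk).1, fun k hk => (key k hk).2, ?_⟩
  funext j
  exact (key m le_rfl).2 j j.isLt
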